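/- Let ι be a type and let u_1,…,u_k be finitely supported functions from ι to the polynomial ring ℂ[t], viewed also as vectors in the ℂ(t)-vector space of finitely supported functions from ι to the rational function field ℂ(t). Then (i) for every t_0 ∈ ℂ, the rank over ℂ of the family of coordinatewise evaluations (u_1(·)(t_0),…,u_k(·)(t_0)) is at most the rank over ℂ(t) of (u_1,…,u_k), and (ii) the set of t_0 ∈ ℂ for which this inequality is strict is finite. -/

import Mathlib

set_option maxHeartbeats 1000000
set_option synthInstance.maxHeartbeats 400000

/-- View a finitely supported family of polynomials as a vector over the field of
rational functions `ℂ(t)`. -/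
noncomputable def finsuppToRatFunc {ι : Type*} (u : ι →₀ Polynomial ℂ) : ι →₀ RatFunc ℂ :=
  Finsupp.mapRange (algebraMap (Polynomial ℂ) (RatFunc ℂ)) (map_zero _) u

/-- Coordinatewise evaluation at `t0 : ℂ` of a finitely supported family of polynomials. -/
noncomputable def finsuppEvalAt {ι : Type*} (t0 : ℂ) (u : ι →₀ Polynomial ℂ) : ι →₀ ℂ :=
  Finsupp.mapRange (Polynomial.eval t0) (by simp) u

open Polynomial Matrix

/-- Linear independence over `ℂ(t)` of the rational-function vectors is equivalent to linear
independence over `ℂ[t]` of the polynomial vectors. -/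
lemma li_toRatFunc_iff {ι : Type} {η : Type*} (p : η → (ι →₀ Polynomial ℂ)) :
    LinearIndependent (RatFunc ℂ) (fun j => finsuppToRatFunc (p j)) ↔
    LinearIndependent (Polynomial ℂ) p := by
  rw [← LinearIndependent.iff_fractionRing (Polynomial ℂ) (RatFunc ℂ)]
  have hF : ∀ x : ι →₀ Polynomial ℂ,
      Finsupp.mapRange.linearMap (Algebra.linearMap (Polynomial ℂ) (RatFunc ℂ)) x
        = finsuppToRatFunc x := fun x => rfl
  have hinj : Function.Injective
      (Finsupp.mapRange.linearMap (Algebra.linearMap (Polynomial ℂ) (RatFunc ℂ))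
        : (ι →₀ Polynomial ℂ) →ₗ[Polynomial ℂ] (ι →₀ RatFunc ℂ)) := by
    intro x y hxy
    rw [hF x, hF y] at hxy
    exact Finsupp.mapRange_injective _ (map_zero _)
      (IsFractionRing.injective (Polynomial ℂ) (RatFunc ℂ)) hxy
  rw [show (fun j => finsuppToRatFunc (p j)) =
      (Finsupp.mapRange.linearMap (Algebra.linearMap (Polynomial ℂ) (RatFunc ℂ))) ∘ p from
      funext fun j => (hF (p j)).symm]
  exact LinearMap.linearIndependent_iff _ (LinearMap.ker_eq_bot.mpr hinj)

/-- If the evaluations at some point are linearly independent over `ℂ`, then the polynomial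
vectors are linearly independent over `ℂ[t]`. -/
lemma li_of_eval {ι : Type} {m : ℕ} (t0 : ℂ) (p : Fin m → (ι →₀ Polynomial ℂ))
    (h : LinearIndependent ℂ (fun j => finsuppEvalAt t0 (p j))) :
    LinearIndependent (Polynomial ℂ) p := by
  classical
  rw [Fintype.linearIndependent_iff]
  intro c hc
  by_contra hne
  push_neg at hne
  obtain ⟨j0, hj0⟩ := hne
  set T : Finset (Fin m) := Finset.univ.filter (fun j => c j ≠ 0) with hT
  have hTne : T.Nonempty := ⟨j0, by simp [hT, hj0]⟩
  set d : ℕ := T.inf' hTne (fun j => (c j).rootMultiplicity t0) with hd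
  have hdvd : ∀ j, (X - C t0) ^ d ∣ c j := by
    intro j
    by_cases hcj : c j = 0
    · simp [hcj]
    · exact dvd_trans (pow_dvd_pow _ (Finset.inf'_le _ (by simp [hT, hcj])))
        (Polynomial.pow_rootMultiplicity_dvd _ _)
  choose e he using hdvd
  have hzero : ∑ j, e j • p j = 0 := by
    have h2 : (X - C t0) ^ d • (∑ j, e j • p j) = (0 : ι →₀ Polynomial ℂ) := by
      rw [Finset.smul_sum]
      simp_rw [smul_smul]
      rw [← hc]
      exact Finset.sum_congr rfl fun j _ => by rw [← he j]
    rcases smul_eq_zero.mp h2 with h3 | h3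
    · exact absurd h3 (pow_ne_zero _ (X_sub_C_ne_zero t0))
    · exact h3
  have heval : ∑ j, ((e j).eval t0) • finsuppEvalAt t0 (p j) = 0 := by
    ext i
    have hcoord : ∑ j, e j * p j i = 0 := by
      have := congrArg (fun f : ι →₀ Polynomial ℂ => f i) hzero
      simpa [Finsupp.finset_sum_apply] using this
    have := congrArg (Polynomial.eval t0) hcoord
    simpa [Finsupp.finset_sum_apply, finsuppEvalAt, Polynomial.eval_finset_sum] using this
  have hall := Fintype.linearIndependent_iff.mp h _ heval
  obtain ⟨j1, hj1T, hj1⟩ := Finset.exists_mem_eq_inf' hTne (fun j => (c j).rootMultiplicity t0)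
  have hcj1 : c j1 ≠ 0 := by simpa [hT] using hj1T
  have hmult : (c j1).rootMultiplicity t0 = d := hj1.symm
  have hroot : ¬ (X - C t0) ^ (d + 1) ∣ c j1 := by
    intro hdd
    have := (Polynomial.le_rootMultiplicity_iff hcj1).mpr hdd
    omega
  have : (e j1).eval t0 ≠ 0 := by
    intro hev
    apply hroot
    have : (X - C t0) ∣ e j1 := Polynomial.dvd_iff_isRoot.mpr hev
    obtain ⟨g, hg⟩ := this
    exact ⟨g, by rw [he j1, hg]; ring⟩
  exact this (hall j1)

/-- If the rational-function vectors are linearly independent, then the evaluated vectors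
are linearly independent for all but finitely many evaluation points. -/
lemma li_eval_cofinite {ι : Type} {m : ℕ} (p : Fin m → (ι →₀ Polynomial ℂ))
    (h : LinearIndependent (RatFunc ℂ) (fun j => finsuppToRatFunc (p j))) :
    {t0 : ℂ | ¬ LinearIndependent ℂ (fun j => finsuppEvalAt t0 (p j))}.Finite := by
  classical
  set w : Fin m → (ι →₀ RatFunc ℂ) := fun j => finsuppToRatFunc (p j) with hw
  set S : Finset ι := Finset.univ.biUnion (fun j => (p j).support) with hS
  set A : Matrix (Fin m) S (RatFunc ℂ) := Matrix.of (fun j i => w j i.1) with hA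
  have hwapp : ∀ j i, w j i = algebraMap (Polynomial ℂ) (RatFunc ℂ) (p j i) := fun j i => rfl
  -- rows of A are linearly independent
  have hrows : LinearIndependent (RatFunc ℂ) (fun j => A j) := by
    rw [Fintype.linearIndependent_iff]
    intro c hc
    apply Fintype.linearIndependent_iff.mp h c
    ext i
    by_cases hi : i ∈ S
    · have h2 := congrFun hc ⟨i, hi⟩
      simp only [Finset.sum_apply, Pi.smul_apply, smul_eq_mul, hA, Matrix.of_apply,
        Pi.zero_apply] at h2
      simpa [Finsupp.finset_sum_apply] using h2
    · have hzero : ∀ j, w j i = 0 := by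
        intro j
        have : i ∉ (p j).support := fun hmem => hi (Finset.mem_biUnion.mpr ⟨j, Finset.mem_univ _, hmem⟩)
        rw [hwapp, Finsupp.notMem_support_iff.mp this, map_zero]
      simp [Finsupp.finset_sum_apply, hzero]
  -- rank of A is m
  have hrank : A.rank = m := by
    rw [← Matrix.rank_transpose, Matrix.rank_eq_finrank_span_cols, Matrix.col_transpose]
    exact (finrank_span_eq_card hrows).trans (Fintype.card_fin m)
  -- columns of A span everything
  have hspan : Submodule.span (RatFunc ℂ) (Set.range Aᵀ) = ⊤ := by
    apply Submodule.eq_top_of_finrank_eq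
    rw [show Set.range Aᵀ = Set.range A.col from rfl, ← Matrix.rank_eq_finrank_span_cols, hrank, Module.finrank_pi, Fintype.card_fin]
  obtain ⟨b, hb_sub, hb_span, hb_li⟩ := exists_linearIndependent (RatFunc ℂ) (Set.range Aᵀ)
  haveI : Fintype b := (Set.Finite.subset (Set.finite_range _) hb_sub).fintype
  have hcard : Fintype.card b = m := by
    have h1 : Module.finrank (RatFunc ℂ)
        (Submodule.span (RatFunc ℂ) (Set.range ((↑) : b → (Fin m → RatFunc ℂ)))) =
        Fintype.card b := finrank_span_eq_card hb_li
    rw [Subtype.range_coe, hb_span, hspan] at h1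
    rw [← h1, finrank_top, Module.finrank_pi, Fintype.card_fin]
  set e : Fin m ≃ b := (Fintype.equivFinOfCardEq hcard).symm with he
  have hmem : ∀ x : b, (x : Fin m → RatFunc ℂ) ∈ Set.range Aᵀ := fun x => hb_sub x.2
  choose g hg using hmem
  set B0 : Matrix (Fin m) (Fin m) (Polynomial ℂ) :=
    Matrix.of (fun a b' => p a (g (e b')).1) with hB0
  have hBmap : B0.map (algebraMap (Polynomial ℂ) (RatFunc ℂ)) =
      Matrix.of (fun a b' => A a (g (e b'))) := by
    ext a b'
    simp [hB0, Matrix.map_apply, hA, hwapp]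
  have hBcols : (fun j => (B0.map (algebraMap (Polynomial ℂ) (RatFunc ℂ)))ᵀ j) =
      (fun j => ((e j : b) : Fin m → RatFunc ℂ)) := by
    funext j
    ext a
    rw [hBmap]
    have := congrFun (hg (e j)) a
    simpa [Matrix.transpose_apply] using this
  have hdet : B0.det ≠ 0 := by
    have hliB : LinearIndependent (RatFunc ℂ)
        (fun j => (B0.map (algebraMap (Polynomial ℂ) (RatFunc ℂ)))ᵀ j) := by
      rw [hBcols]
      exact hb_li.comp e e.injective
    have hunit := Matrix.linearIndependent_cols_iff_isUnit.mp hliB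
    have hdet' := (Matrix.isUnit_iff_isUnit_det _).mp hunit
    have hmd := (algebraMap (Polynomial ℂ) (RatFunc ℂ)).map_det B0
    rw [RingHom.mapMatrix_apply] at hmd
    rw [← hmd] at hdet'
    intro h0
    rw [h0, map_zero] at hdet'
    exact (not_isUnit_zero : ¬ IsUnit (0 : RatFunc ℂ)) hdet'
  apply Set.Finite.subset (Polynomial.finite_setOf_isRoot hdet)
  intro t0 ht0
  simp only [Set.mem_setOf_eq] at ht0 ⊢
  by_contra hroot
  apply ht0
  set B1 : Matrix (Fin m) (Fin m) ℂ := B0.map (Polynomial.eval t0) with hB1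
  have hdet1 : B1.det ≠ 0 := by
    have hd : B1.det = Polynomial.eval t0 B0.det := by
      have hmd := (Polynomial.evalRingHom t0).map_det B0
      rw [RingHom.mapMatrix_apply] at hmd
      rw [hB1, ← Polynomial.coe_evalRingHom, ← hmd]
    rw [hd]
    exact hroot
  have hliB1 : LinearIndependent ℂ (fun j => B1 j) :=
    Matrix.linearIndependent_rows_iff_isUnit.mpr
      ((Matrix.isUnit_iff_isUnit_det _).mpr (isUnit_iff_ne_zero.mpr hdet1))
  set π : (ι →₀ ℂ) →ₗ[ℂ] (Fin m → ℂ) :=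
    LinearMap.pi (fun j' => Finsupp.lapply (g (e j')).1) with hπ
  apply LinearIndependent.of_comp π
  have hπeq : (⇑π ∘ fun j => finsuppEvalAt t0 (p j)) = (fun j => B1 j) := by
    funext j
    ext j'
    simp [hπ, hB1, hB0, finsuppEvalAt, Matrix.map_apply]
  rw [hπeq]
  exact hliB1

section Glue
variable {F M : Type*} [Field F] [AddCommGroup M] [Module F M]

lemma exists_li_subfamily {k : ℕ} (v : Fin k → M) :
    ∃ (m : ℕ) (f : Fin m → Fin k), LinearIndependent F (fun j => v (f j)) ∧
      Module.finrank F (Submodule.span F (Set.range v)) = m := by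
  classical
  obtain ⟨b, hb_sub, hb_span, hb_li⟩ := exists_linearIndependent F (Set.range v)
  haveI : Fintype b := (Set.Finite.subset (Set.finite_range v) hb_sub).fintype
  set m := Fintype.card b with hm
  set e : Fin m ≃ b := (Fintype.equivFin b).symm with he
  have hmem : ∀ x : b, ∃ j, v j = x := fun x => hb_sub x.2
  choose f0 hf0 using hmem
  refine ⟨m, fun j => f0 (e j), ?_, ?_⟩
  · have heq : (fun j => v (f0 (e j))) = (fun j => ((e j : b) : M)) :=
      funext fun j => hf0 (e j)
    rw [heq]
    exact hb_li.comp e e.injective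
  · rw [← hb_span]
    have h1 : Module.finrank F (Submodule.span F (Set.range ((↑) : b → M))) =
        Fintype.card b := finrank_span_eq_card hb_li
    rw [Subtype.range_coe] at h1
    rw [h1]

lemma li_subfamily_le {k m : ℕ} (v : Fin k → M) (f : Fin m → Fin k)
    (hli : LinearIndependent F (fun j => v (f j))) :
    m ≤ Module.finrank F (Submodule.span F (Set.range v)) := by
  haveI : FiniteDimensional F (Submodule.span F (Set.range v)) :=
    FiniteDimensional.span_of_finite F (Set.finite_range v)
  have h1 : Module.finrank F (Submodule.span F (Set.range fun j => v (f j))) = m := by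
    rw [finrank_span_eq_card hli, Fintype.card_fin]
  rw [← h1]
  exact Submodule.finrank_mono (Submodule.span_mono
    (by rintro _ ⟨j, rfl⟩; exact ⟨f j, rfl⟩))

end Glue

/-- (i) For every `t0 : ℂ` the rank over `ℂ` of the specialized family
is at most the rank over `ℂ(t)` of the original family; (ii) the set of `t0` where the
inequality is strict is finite. -/
theorem rank_of_specialization {ι : Type} (k : ℕ) (u : Fin k → (ι →₀ Polynomial ℂ)) :
    (∀ t0 : ℂ,
      Module.finrank ℂ
          (Submodule.span ℂ (Set.range fun j => finsuppEvalAt t0 (u j)))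
        ≤ Module.finrank (RatFunc ℂ)
            (Submodule.span (RatFunc ℂ) (Set.range fun j => finsuppToRatFunc (u j)))) ∧
    {t0 : ℂ |
      Module.finrank ℂ
          (Submodule.span ℂ (Set.range fun j => finsuppEvalAt t0 (u j)))
        < Module.finrank (RatFunc ℂ)
            (Submodule.span (RatFunc ℂ) (Set.range fun j => finsuppToRatFunc (u j)))}.Finite := by
  classical
  have part1 : ∀ t0 : ℂ,
      Module.finrank ℂ (Submodule.span ℂ (Set.range fun j => finsuppEvalAt t0 (u j)))
        ≤ Module.finrank (RatFunc ℂ)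
            (Submodule.span (RatFunc ℂ) (Set.range fun j => finsuppToRatFunc (u j))) := by
    intro t0
    obtain ⟨m, f, hli, hm⟩ := exists_li_subfamily (F := ℂ) (fun j => finsuppEvalAt t0 (u j))
    rw [hm]
    have h2 : LinearIndependent (Polynomial ℂ) (u ∘ f) :=
      li_of_eval t0 (u ∘ f) hli
    have h3 : LinearIndependent (RatFunc ℂ) (fun j => finsuppToRatFunc ((u ∘ f) j)) :=
      (li_toRatFunc_iff (u ∘ f)).mpr h2
    exact li_subfamily_le (fun j => finsuppToRatFunc (u j)) f h3
  refine ⟨part1, ?_⟩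
  obtain ⟨m, f, hli, hm⟩ := exists_li_subfamily (F := RatFunc ℂ)
    (fun j => finsuppToRatFunc (u j))
  have hfin := li_eval_cofinite (u ∘ f) hli
  apply Set.Finite.subset hfin
  intro t0 ht0
  simp only [Set.mem_setOf_eq] at ht0 ⊢
  intro hli'
  have hle := li_subfamily_le (fun j => finsuppEvalAt t0 (u j)) f hli'
  rw [hm] at ht0
  omega
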